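/- Let p ≥ 5 be prime and m ≥ 1. For every x ∈ ℤ/p^mℤ there exist k ≤ 4 and units a₁,…,a_k ∈ (ℤ/p^mℤ)ˣ such that x = a₁² + ⋯ + a_k². -/

import Mathlib

lemma aux_isUnit_of_cast (p m : ℕ) (hp : p.Prime) (hm : m ≠ 0) (x : ZMod (p ^ m))
    (h : IsUnit (ZMod.castHom (dvd_pow_self p hm) (ZMod p) x)) : IsUnit x := by
  haveI : NeZero (p ^ m) := ⟨pow_ne_zero m hp.ne_zero⟩
  have hx : x = ((x.val : ℕ) : ZMod (p ^ m)) := (ZMod.natCast_zmod_val x).symm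
  rw [hx, map_natCast] at h
  rw [hx, ZMod.isUnit_iff_coprime]
  rw [ZMod.isUnit_iff_coprime] at h
  exact Nat.Coprime.pow_right m h

lemma aux_fp (p : ℕ) (hp : p.Prime) (u : ZMod p) (hu : u ≠ 0) :
    (∃ b : ZMod p, b ≠ 0 ∧ u = b ^ 2) ∨
    (∃ b c : ZMod p, b ≠ 0 ∧ c ≠ 0 ∧ u = b ^ 2 + c ^ 2) := by
  haveI : Fact p.Prime := ⟨hp⟩
  by_cases hsq : IsSquare u
  · obtain ⟨s, hs⟩ := hsq
    refine Or.inl ⟨s, fun h => hu (by simp [hs, h]), by rw [hs, sq]⟩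
  · obtain ⟨a, b, hab⟩ := ZMod.sq_add_sq p u
    have ha : a ≠ 0 := by
      rintro rfl
      exact hsq ⟨b, by rw [← sq, ← hab]; ring⟩
    have hb : b ≠ 0 := by
      rintro rfl
      exact hsq ⟨a, by rw [← sq, ← hab]; ring⟩
    exact Or.inr ⟨a, b, ha, hb, hab.symm⟩

lemma aux_square_lift (p m : ℕ) (hp : p.Prime) (hp5 : 5 ≤ p) (hm : m ≠ 0)
    (x : (ZMod (p ^ m))ˣ) (h : IsSquare (ZMod.unitsMap (dvd_pow_self p hm) x)) :
    IsSquare x := by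
  haveI : Fact p.Prime := ⟨hp⟩
  haveI : NeZero (p ^ m) := ⟨pow_ne_zero m hp.ne_zero⟩
  set φ := ZMod.unitsMap (dvd_pow_self p hm) with hφ
  have hsurj : Function.Surjective φ := ZMod.unitsMap_surjective _
  -- card of the kernel
  have hcardG : Nat.card (ZMod (p ^ m))ˣ = p ^ (m - 1) * (p - 1) := by
    rw [Nat.card_eq_fintype_card, ZMod.card_units_eq_totient,
      Nat.totient_prime_pow hp (Nat.pos_of_ne_zero hm)]
  have hcardH : Nat.card (ZMod p)ˣ = p - 1 := by
    rw [Nat.card_eq_fintype_card, ZMod.card_units_eq_totient, Nat.totient_prime hp]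
  have hquot : Nat.card ((ZMod (p ^ m))ˣ ⧸ φ.ker) = p - 1 := by
    rw [Nat.card_congr (QuotientGroup.quotientKerEquivOfSurjective φ hsurj).toEquiv, hcardH]
  have hker : Nat.card φ.ker = p ^ (m - 1) := by
    have := Subgroup.card_eq_card_quotient_mul_card_subgroup φ.ker
    rw [hcardG, hquot] at this
    have hp1 : 0 < p - 1 := by omega
    have : (p - 1) * p ^ (m - 1) = (p - 1) * Nat.card φ.ker := by linarith [this]
    exact (Nat.eq_of_mul_eq_mul_left hp1 this).symm
  -- the element y = x * w⁻² lies in the kernel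
  obtain ⟨v, hv⟩ := h
  obtain ⟨w, hw⟩ := hsurj v
  set y := x * (w⁻¹) ^ 2 with hy
  have hyk : y ∈ φ.ker := by
    rw [MonoidHom.mem_ker, hy, map_mul, map_pow, map_inv, hw, hv]
    group
  have hord : orderOf y ∣ p ^ (m - 1) := hker ▸ Subgroup.orderOf_dvd_natCard φ.ker hyk
  have hpodd : Odd (p ^ (m - 1)) := (hp.odd_of_ne_two (by omega)).pow
  have hodd : Odd (orderOf y) := by
    rcases Nat.even_or_odd (orderOf y) with he | ho
    · exfalso
      obtain ⟨c, hc⟩ := he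
      have h2 : 2 ∣ p ^ (m - 1) := dvd_trans ⟨c, by omega⟩ hord
      rw [Nat.odd_iff] at hpodd
      omega
    · exact ho
  obtain ⟨o, ho⟩ := hodd
  refine ⟨w * y ^ (o + 1), ?_⟩
  rw [← sq, mul_pow, ← pow_mul]
  have he : (o + 1) * 2 = orderOf y + 1 := by omega
  rw [he, pow_succ y, pow_orderOf_eq_one, one_mul, hy, inv_pow, mul_comm x,
    mul_inv_cancel_left]

lemma aux_two_squares (p m : ℕ) (hp : p.Prime) (hp5 : 5 ≤ p) (hm : m ≠ 0)
    (x : ZMod (p ^ m)) (hx : IsUnit x) :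
    (∃ w : (ZMod (p ^ m))ˣ, x = (w : ZMod (p ^ m)) ^ 2) ∨
    (∃ w v : (ZMod (p ^ m))ˣ, x = (w : ZMod (p ^ m)) ^ 2 + (v : ZMod (p ^ m)) ^ 2) := by
  haveI : Fact p.Prime := ⟨hp⟩
  haveI : NeZero (p ^ m) := ⟨pow_ne_zero m hp.ne_zero⟩
  set ρ := ZMod.castHom (dvd_pow_self p hm) (ZMod p) with hρ
  have key : ∀ (z : ZMod (p ^ m)) (hz : IsUnit z),
      (ZMod.unitsMap (dvd_pow_self p hm) hz.unit : ZMod p) = ρ z := by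
    intro z hz
    rw [ZMod.unitsMap_def]
    simp [IsUnit.unit_spec, hρ, ZMod.castHom_apply]
  have lift : ∀ (z : ZMod (p ^ m)) (hz : IsUnit z) (b : ZMod p), b ≠ 0 → ρ z = b ^ 2 →
      ∃ w : (ZMod (p ^ m))ˣ, z = (w : ZMod (p ^ m)) ^ 2 := by
    intro z hz b hb hzb
    have hsq : IsSquare (ZMod.unitsMap (dvd_pow_self p hm) hz.unit) := by
      refine ⟨Units.mk0 b hb, Units.ext ?_⟩
      rw [Units.val_mul, Units.val_mk0, key z hz, hzb, sq]
    obtain ⟨w, hw⟩ := aux_square_lift p m hp hp5 hm hz.unit hsq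
    exact ⟨w, by rw [← IsUnit.unit_spec hz, hw, Units.val_mul, sq]⟩
  have hρx : ρ x ≠ 0 := (hx.map ρ).ne_zero
  rcases aux_fp p hp (ρ x) hρx with ⟨b, hb, hub⟩ | ⟨b, c, hb, hc, hubc⟩
  · exact Or.inl (lift x hx b hb hub)
  · obtain ⟨c', hc'⟩ := ZMod.unitsMap_surjective (dvd_pow_self p hm) (Units.mk0 c hc)
    have hcc : ρ (c' : ZMod (p ^ m)) = c := by
      have := congrArg Units.val hc'
      rw [ZMod.unitsMap_def] at this
      simpa [hρ, ZMod.castHom_apply] using this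
    set y := x - (c' : ZMod (p ^ m)) ^ 2 with hy
    have hρy : ρ y = b ^ 2 := by
      rw [hy, map_sub, map_pow, hcc, hubc]
      ring
    have hyu : IsUnit y :=
      aux_isUnit_of_cast p m hp hm y
        (by rw [hρy]; exact isUnit_iff_ne_zero.mpr (pow_ne_zero 2 hb))
    obtain ⟨w, hw⟩ := lift y hyu b hb hρy
    exact Or.inr ⟨w, c', by rw [← hw, hy]; ring⟩


theorem sum_of_four_unit_squares (p : ℕ) (hp : p.Prime) (hp5 : 5 ≤ p) (m : ℕ) (hm : 1 ≤ m)
    (x : ZMod (p ^ m)) :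
    ∃ k : ℕ, k ≤ 4 ∧ ∃ a : Fin k → (ZMod (p ^ m))ˣ,
      x = ∑ i, ((a i : ZMod (p ^ m))) ^ 2 := by
  haveI : Fact p.Prime := ⟨hp⟩
  haveI : NeZero (p ^ m) := ⟨pow_ne_zero m hp.ne_zero⟩
  have hm' : m ≠ 0 := by omega
  set ρ := ZMod.castHom (dvd_pow_self p hm') (ZMod p) with hρ
  have h2p : (2 : ZMod p) ≠ 0 := by
    have : ((2 : ℕ) : ZMod p) ≠ 0 := by
      rw [Ne, ZMod.natCast_eq_zero_iff]
      intro h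
      have := Nat.le_of_dvd (by norm_num) h
      omega
    simpa using this
  by_cases hx : IsUnit x
  · rcases aux_two_squares p m hp hp5 hm' x hx with ⟨w, hw⟩ | ⟨w, v, hwv⟩
    · exact ⟨1, by omega, ![w], by simpa using hw⟩
    · exact ⟨2, by omega, ![w, v], by simpa [Fin.sum_univ_two] using hwv⟩
  · have hux : IsUnit (x - 2) := by
      apply aux_isUnit_of_cast p m hp hm'
      rw [map_sub]
      have hρx : ρ x = 0 := by
        by_contra h
        exact hx (aux_isUnit_of_cast p m hp hm' x (isUnit_iff_ne_zero.mpr h))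
      rw [hρx]
      simp only [map_ofNat]
      apply isUnit_iff_ne_zero.mpr
      simpa using h2p
    rcases aux_two_squares p m hp hp5 hm' (x - 2) hux with ⟨w, hw⟩ | ⟨w, v, hwv⟩
    · refine ⟨3, by omega, ![w, 1, 1], ?_⟩
      simp only [Fin.sum_univ_three, Matrix.cons_val_zero, Matrix.cons_val_one, Matrix.head_cons,
        Matrix.cons_val_two, Matrix.tail_cons, Units.val_one, one_pow]
      linear_combination hw
    · refine ⟨4, by omega, ![w, v, 1, 1], ?_⟩
      simp only [Fin.sum_univ_four, Matrix.cons_val_zero, Matrix.cons_val_one, Matrix.head_cons,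
        Matrix.cons_val_two, Matrix.tail_cons, Matrix.cons_val_three, Units.val_one, one_pow]
      linear_combination hwv
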